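/- arXiv:0710.3327 — 4 statements merged into one kernel-verified Lean document; each statement's English description precedes it below -/
import Mathlib

section
/- Let c₁, c₂, c₃ ∈ ℂ³ be vectors of positive norm forming a basis, with respect to a Hermitian form h of signature (2,1). Define φᵢⱼ = |h(cᵢ,cⱼ)|² / (h(cᵢ,cᵢ)h(cⱼ,cⱼ)) and Φ₁₂₃ = h(c₁,c₂)h(c₂,c₃)h(c₃,c₁) / (h(c₁,c₁)h(c₂,c₂)h(c₃,c₃)). Then 1 − φ₁₂ − φ₂₃ − φ₃₁ + Φ₁₂₃ + conj(Φ₁₂₃) < 0 (as a real number). -/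
open Matrix Complex

noncomputable def herm (H : Matrix (Fin 3) (Fin 3) ℂ) (v w : Fin 3 → ℂ) : ℂ :=
  ∑ i, ∑ j, v i * H i j * (starRingEnd ℂ) (w j)

lemma herm_conj (H : Matrix (Fin 3) (Fin 3) ℂ) (hH : Hᴴ = H) (v w : Fin 3 → ℂ) :
    (starRingEnd ℂ) (herm H v w) = herm H w v := by
  simp only [herm, map_sum]
  rw [Finset.sum_comm]
  refine Finset.sum_congr rfl fun j _ => Finset.sum_congr rfl fun i _ => ?_
  have h1 : (starRingEnd ℂ) (H i j) = H j i := by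
    conv_rhs => rw [← hH]
    rfl
  rw [RingHom.map_mul, RingHom.map_mul, h1, Complex.conj_conj]
  ring

lemma herm_eq_mul (H : Matrix (Fin 3) (Fin 3) ℂ) (C : Matrix (Fin 3) (Fin 3) ℂ) (i j : Fin 3) :
    (C * H * Cᴴ) i j = herm H (C i) (C j) := by
  simp only [herm, Matrix.mul_apply, Matrix.conjTranspose_apply, Finset.sum_mul,
    starRingEnd_apply]
  rw [Finset.sum_comm]

/-- For a Hermitian form of signature (2,1) and three positive vectors forming a basis,
the Gram-type inequality 1 − φ₁₂ − φ₂₃ − φ₃₁ + Φ₁₂₃ + conj Φ₁₂₃ < 0 holds. -/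
theorem stmt1 (H : Matrix (Fin 3) (Fin 3) ℂ) (hH : Hᴴ = H)
    (hsig : ∃ P : Matrix (Fin 3) (Fin 3) ℂ, IsUnit P.det ∧
      Pᴴ * H * P = Matrix.diagonal ![1, 1, -1])
    (c₁ c₂ c₃ : Fin 3 → ℂ)
    (hbasis : LinearIndependent ℂ ![c₁, c₂, c₃])
    (h1 : 0 < (herm H c₁ c₁).re) (h2 : 0 < (herm H c₂ c₂).re)
    (h3 : 0 < (herm H c₃ c₃).re) :
    (1 : ℝ)
      - Complex.normSq (herm H c₁ c₂) / ((herm H c₁ c₁).re * (herm H c₂ c₂).re)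
      - Complex.normSq (herm H c₂ c₃) / ((herm H c₂ c₂).re * (herm H c₃ c₃).re)
      - Complex.normSq (herm H c₃ c₁) / ((herm H c₃ c₃).re * (herm H c₁ c₁).re)
      + 2 * (herm H c₁ c₂ * herm H c₂ c₃ * herm H c₃ c₁ /
          (herm H c₁ c₁ * herm H c₂ c₂ * herm H c₃ c₃)).re < 0 := by
  obtain ⟨P, hPunit, hP⟩ := hsig
  -- determinant of H is a negative real
  have key : ((Complex.normSq P.det : ℝ) : ℂ) * H.det = -1 := by
    have h := congrArg Matrix.det hP
    rw [Matrix.det_mul, Matrix.det_mul, Matrix.det_conjTranspose] at h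
    rw [show Matrix.det (Matrix.diagonal ![(1:ℂ),1,-1]) = -1 by
      simp [Matrix.det_diagonal, Fin.prod_univ_three]] at h
    rw [Complex.normSq_eq_conj_mul_self, starRingEnd_apply]
    linear_combination h
  have hPpos : 0 < Complex.normSq P.det := by
    simpa [Complex.normSq_pos] using hPunit.ne_zero
  have hdetH : H.det = ((-(Complex.normSq P.det)⁻¹ : ℝ) : ℂ) := by
    have hne : ((Complex.normSq P.det : ℝ) : ℂ) ≠ 0 := by
      exact_mod_cast hPpos.ne'
    push_cast
    field_simp
    linear_combination key
  set C : Matrix (Fin 3) (Fin 3) ℂ := Matrix.of ![c₁, c₂, c₃] with hCdef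
  have hCunit : IsUnit C := Matrix.linearIndependent_rows_iff_isUnit.mp hbasis
  have hCdet : C.det ≠ 0 := by
    have := (Matrix.isUnit_iff_isUnit_det C).mp hCunit
    exact this.ne_zero
  set D : Matrix (Fin 3) (Fin 3) ℂ := C * H * Cᴴ with hDdef
  have hdetD : D.det = ((Complex.normSq C.det : ℝ) : ℂ) * H.det := by
    rw [hDdef, Matrix.det_mul, Matrix.det_mul, Matrix.det_conjTranspose,
      Complex.normSq_eq_conj_mul_self, starRingEnd_apply]
    ring
  have hre : D.det.re < 0 := by
    rw [hdetD, hdetH, ← Complex.ofReal_mul]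
    rw [Complex.ofReal_re]
    have hCpos : 0 < Complex.normSq C.det := Complex.normSq_pos.mpr hCdet
    have : 0 < (Complex.normSq P.det)⁻¹ := inv_pos.mpr hPpos
    nlinarith
  -- identify entries
  have hC0 : C 0 = c₁ := rfl
  have hC1 : C 1 = c₂ := rfl
  have hC2 : C 2 = c₃ := rfl
  set a := (herm H c₁ c₁).re with hadef
  set b := (herm H c₂ c₂).re with hbdef
  set c := (herm H c₃ c₃).re with hcdef
  have hreal : ∀ v : Fin 3 → ℂ, herm H v v = (((herm H v v).re : ℝ) : ℂ) :=
    fun v => (Complex.conj_eq_iff_re.mp (herm_conj H hH v v)).symm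
  set g12 := herm H c₁ c₂ with hg12
  set g23 := herm H c₂ c₃ with hg23
  set g31 := herm H c₃ c₁ with hg31
  have hD00 : D 0 0 = ((a : ℝ) : ℂ) := by rw [hDdef, herm_eq_mul, hC0]; exact hreal c₁
  have hD11 : D 1 1 = ((b : ℝ) : ℂ) := by rw [hDdef, herm_eq_mul, hC1]; exact hreal c₂
  have hD22 : D 2 2 = ((c : ℝ) : ℂ) := by rw [hDdef, herm_eq_mul, hC2]; exact hreal c₃
  have hD01 : D 0 1 = g12 := by rw [hDdef, herm_eq_mul, hC0, hC1]
  have hD12 : D 1 2 = g23 := by rw [hDdef, herm_eq_mul, hC1, hC2]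
  have hD20 : D 2 0 = g31 := by rw [hDdef, herm_eq_mul, hC2, hC0]
  have hD10 : D 1 0 = (starRingEnd ℂ) g12 := by
    rw [hDdef, herm_eq_mul, hC1, hC0, hg12, herm_conj H hH]
  have hD21 : D 2 1 = (starRingEnd ℂ) g23 := by
    rw [hDdef, herm_eq_mul, hC2, hC1, hg23, herm_conj H hH]
  have hD02 : D 0 2 = (starRingEnd ℂ) g31 := by
    rw [hDdef, herm_eq_mul, hC0, hC2, hg31, herm_conj H hH]
  have hdet3 : D.det = ((a:ℝ):ℂ) * ((b:ℝ):ℂ) * ((c:ℝ):ℂ)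
      - ((a:ℝ):ℂ) * g23 * (starRingEnd ℂ) g23
      - g12 * (starRingEnd ℂ) g12 * ((c:ℝ):ℂ)
      + g12 * g23 * g31
      + (starRingEnd ℂ) g31 * (starRingEnd ℂ) g12 * (starRingEnd ℂ) g23
      - (starRingEnd ℂ) g31 * ((b:ℝ):ℂ) * g31 := by
    rw [Matrix.det_fin_three, hD00, hD01, hD02, hD10, hD11, hD12, hD20, hD21, hD22]
  have hprod : herm H c₁ c₁ * herm H c₂ c₂ * herm H c₃ c₃ = ((a * b * c : ℝ) : ℂ) := by
    rw [hreal c₁, hreal c₂, hreal c₃]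
    push_cast
    rfl
  have hgoal_eq : (1 : ℝ)
      - Complex.normSq g12 / (a * b)
      - Complex.normSq g23 / (b * c)
      - Complex.normSq g31 / (c * a)
      + 2 * (g12 * g23 * g31 /
          (herm H c₁ c₁ * herm H c₂ c₂ * herm H c₃ c₃)).re = D.det.re / (a * b * c) := by
    rw [hprod, hdet3, Complex.div_ofReal_re]
    simp only [Complex.add_re, Complex.sub_re, Complex.mul_re, Complex.mul_im,
      Complex.ofReal_re, Complex.ofReal_im, Complex.conj_re, Complex.conj_im,
      Complex.normSq_apply]
    field_simp
    ring
  rw [hgoal_eq]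
  exact div_neg_of_neg_of_pos hre (by positivity)
end

section
/- Let h be a Hermitian form of signature (2,1) on ℂ³, let c₁,c₂ have positive norm with C₁ ≠ C₂ (c₁,c₂ linearly independent), and let p₁,p₂ be nonzero isotropic vectors with h(c₁,p₂), h(p₁,c₂), h(c₁,c₂), h(p₁,p₂) all nonzero. Define m₁₂ = h(c₁,c₂)h(p₁,p₂)/(h(c₁,p₂)h(p₁,c₂)) and φ₁₂ = |h(c₁,c₂)|²/(h(c₁,c₁)h(c₂,c₂)). Suppose h(p₁,c₁) = 0 and h(p₂,c₂) = 0 (p₁ ∈ C₁, p₂ ∈ C₂). Then m₁₂ ≠ 1 and φ₁₂ = |m₁₂/(m₁₂−1)|². -/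
open Matrix Complex

lemma det_fin_four' (M : Matrix (Fin 4) (Fin 4) ℂ) :
    M.det =
      M 0 0 * (M 1 1 * (M 2 2 * M 3 3 - M 2 3 * M 3 2) - M 1 2 * (M 2 1 * M 3 3 - M 2 3 * M 3 1) + M 1 3 * (M 2 1 * M 3 2 - M 2 2 * M 3 1))
    - M 0 1 * (M 1 0 * (M 2 2 * M 3 3 - M 2 3 * M 3 2) - M 1 2 * (M 2 0 * M 3 3 - M 2 3 * M 3 0) + M 1 3 * (M 2 0 * M 3 2 - M 2 2 * M 3 0))
    + M 0 2 * (M 1 0 * (M 2 1 * M 3 3 - M 2 3 * M 3 1) - M 1 1 * (M 2 0 * M 3 3 - M 2 3 * M 3 0) + M 1 3 * (M 2 0 * M 3 1 - M 2 1 * M 3 0))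
    - M 0 3 * (M 1 0 * (M 2 1 * M 3 2 - M 2 2 * M 3 1) - M 1 1 * (M 2 0 * M 3 2 - M 2 2 * M 3 0) + M 1 2 * (M 2 0 * M 3 1 - M 2 1 * M 3 0)) := by
  rw [Matrix.det_succ_row_zero]
  simp [Fin.sum_univ_succ, Matrix.det_fin_three, Fin.succAbove]
  try simp only [show (Fin.succ 2 : Fin 4) = 3 from rfl, show ((2 : Fin 3).castSucc : Fin 4) = 2 from rfl]
  try rw [if_pos (show ((1:Fin 4) < 3) by decide)]
  ring

/-- The m-invariant of a pair of flags in generic position satisfies m₁₂ ≠ 1 and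
φ₁₂ = |m₁₂/(m₁₂−1)|². -/
theorem stmt5 (H : Matrix (Fin 3) (Fin 3) ℂ) (hH : Hᴴ = H)
    (hsig : ∃ P : Matrix (Fin 3) (Fin 3) ℂ, IsUnit P.det ∧
      Pᴴ * H * P = Matrix.diagonal ![1, 1, -1])
    (c₁ c₂ p₁ p₂ : Fin 3 → ℂ)
    (hc1 : 0 < (herm H c₁ c₁).re) (hc2 : 0 < (herm H c₂ c₂).re)
    (hind : LinearIndependent ℂ ![c₁, c₂])
    (hp1 : p₁ ≠ 0) (hp2 : p₂ ≠ 0)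
    (hiso1 : herm H p₁ p₁ = 0) (hiso2 : herm H p₂ p₂ = 0)
    (hn1 : herm H c₁ p₂ ≠ 0) (hn2 : herm H p₁ c₂ ≠ 0)
    (hn3 : herm H c₁ c₂ ≠ 0) (hn4 : herm H p₁ p₂ ≠ 0)
    (horth1 : herm H p₁ c₁ = 0) (horth2 : herm H p₂ c₂ = 0) :
    herm H c₁ c₂ * herm H p₁ p₂ / (herm H c₁ p₂ * herm H p₁ c₂) ≠ 1 ∧
    Complex.normSq (herm H c₁ c₂) / ((herm H c₁ c₁).re * (herm H c₂ c₂).re) =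
      Complex.normSq
        ((herm H c₁ c₂ * herm H p₁ p₂ / (herm H c₁ p₂ * herm H p₁ c₂)) /
         (herm H c₁ c₂ * herm H p₁ p₂ / (herm H c₁ p₂ * herm H p₁ c₂) - 1)) := by
  classical
  set a := herm H c₁ c₁ with ha
  set b := herm H c₂ c₂ with hb
  set x := herm H c₁ c₂ with hx
  set y := herm H p₁ p₂ with hy
  set u := herm H c₁ p₂ with hu
  set v := herm H p₁ c₂ with hv
  -- Gram matrix
  set V : Fin 4 → (Fin 3 → ℂ) := ![c₁, c₂, p₁, p₂] with hVdef
  set A : Matrix (Fin 4) (Fin 3) ℂ := Matrix.of V with hAdef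
  set G : Matrix (Fin 4) (Fin 4) ℂ := A * H * Aᴴ with hGdef
  have hGentry : ∀ i j, G i j = herm H (V i) (V j) := by
    intro i j
    simp only [hGdef, Matrix.mul_apply, Matrix.conjTranspose_apply, Finset.sum_mul, herm]
    rw [Finset.sum_comm]
    refine Finset.sum_congr rfl fun k _ => Finset.sum_congr rfl fun l _ => ?_
    simp only [hAdef, Matrix.of_apply, starRingEnd_apply]
    try ring
  have hdet : G.det = 0 := by
    by_contra h
    have hunit : IsUnit G := (Matrix.isUnit_iff_isUnit_det G).mpr (Ne.isUnit h)
    have h4 : G.rank = 4 := by simpa using Matrix.rank_of_isUnit G hunit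
    have h3 : G.rank ≤ 3 := by
      calc G.rank ≤ (A * H).rank := Matrix.rank_mul_le_left (A * H) Aᴴ
        _ ≤ A.rank := Matrix.rank_mul_le_left A H
        _ ≤ 3 := by simpa using A.rank_le_card_width
    omega
  -- entries
  have hV0 : V 0 = c₁ := rfl
  have hV1 : V 1 = c₂ := rfl
  have hV2 : V 2 = p₁ := rfl
  have hV3 : V 3 = p₂ := rfl
  have e00 : G 0 0 = a := by rw [hGentry, hV0]
  have e01 : G 0 1 = x := by rw [hGentry, hV0, hV1]
  have e02 : G 0 2 = 0 := by
    rw [hGentry, hV0, hV2, ← herm_conj H hH p₁ c₁, horth1, map_zero]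
  have e03 : G 0 3 = u := by rw [hGentry, hV0, hV3]
  have e10 : G 1 0 = (starRingEnd ℂ) x := by
    rw [hGentry, hV1, hV0, ← herm_conj H hH c₁ c₂]
  have e11 : G 1 1 = b := by rw [hGentry, hV1]
  have e12 : G 1 2 = (starRingEnd ℂ) v := by
    rw [hGentry, hV1, hV2, ← herm_conj H hH p₁ c₂]
  have e13 : G 1 3 = 0 := by
    rw [hGentry, hV1, hV3, ← herm_conj H hH p₂ c₂, horth2, map_zero]
  have e20 : G 2 0 = 0 := by rw [hGentry, hV2, hV0]; exact horth1
  have e21 : G 2 1 = v := by rw [hGentry, hV2, hV1]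
  have e22 : G 2 2 = 0 := by rw [hGentry, hV2]; exact hiso1
  have e23 : G 2 3 = y := by rw [hGentry, hV2, hV3]
  have e30 : G 3 0 = (starRingEnd ℂ) u := by
    rw [hGentry, hV3, hV0, ← herm_conj H hH c₁ p₂]
  have e31 : G 3 1 = 0 := by rw [hGentry, hV3, hV1]; exact horth2
  have e32 : G 3 2 = (starRingEnd ℂ) y := by
    rw [hGentry, hV3, hV2, ← herm_conj H hH p₁ p₂]
  have e33 : G 3 3 = 0 := by rw [hGentry, hV3]; exact hiso2
  have hd := det_fin_four' G
  rw [hdet, e00, e01, e02, e03, e10, e11, e12, e13, e20, e21, e22, e23, e30, e31, e32, e33] at hd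
  -- reality of a and b
  have haR : a = ((a.re : ℝ) : ℂ) := by
    have : (starRingEnd ℂ) a = a := herm_conj H hH c₁ c₁
    exact (Complex.conj_eq_iff_re.mp this).symm
  have hbR : b = ((b.re : ℝ) : ℂ) := by
    have : (starRingEnd ℂ) b = b := herm_conj H hH c₂ c₂
    exact (Complex.conj_eq_iff_re.mp this).symm
  -- key complex identity
  have key : (x * y - u * v) * (starRingEnd ℂ) (x * y - u * v) = a * b * (y * (starRingEnd ℂ) y) := by
    simp only [map_sub, _root_.map_mul]
    linear_combination -hd
  -- key real identity
  have hreal : Complex.normSq (x * y - u * v) = a.re * b.re * Complex.normSq y := by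
    have : ((Complex.normSq (x * y - u * v) : ℝ) : ℂ)
        = ((a.re * b.re * Complex.normSq y : ℝ) : ℂ) := by
      rw [← Complex.mul_conj]
      push_cast
      rw [← Complex.mul_conj]
      rw [key, haR, hbR]
      simp only [Complex.ofReal_re]
      try ring
    exact_mod_cast this
  have hy0 : Complex.normSq y ≠ 0 := by simpa using hn4
  have hab : a.re * b.re > 0 := mul_pos hc1 hc2
  have hypos : 0 < Complex.normSq y := Complex.normSq_pos.mpr hn4
  have hsub : x * y - u * v ≠ 0 := by
    intro h0
    have h1 : (0:ℝ) = a.re * b.re * Complex.normSq y := by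
      rw [← hreal, h0, map_zero]
    nlinarith
  have huv : u * v ≠ 0 := mul_ne_zero hn1 hn2
  have hm1 : x * y / (u * v) ≠ 1 := by
    intro h
    exact hsub (sub_eq_zero.mpr ((div_eq_one_iff_eq huv).mp h))
  refine ⟨hm1, ?_⟩
  have hquot : x * y / (u * v) / (x * y / (u * v) - 1) = x * y / (x * y - u * v) := by
    field_simp
  rw [hquot, Complex.normSq_div, _root_.map_mul]
  rw [hreal]
  field_simp
end

section
/- Let H be the Hermitian matrix with rows (1,b,0),(conj b,1,0),(0,0,|b|²−1) with b ∈ ℂ, |b| ≠ 1, b ≠ 0, and let p₁ = (−b, 1, e^{iθ₁}), p₂ = (1, −conj b, e^{iθ₂}) for real θ₁, θ₂. Then there exist unique (up to scalar of modulus 1 acting projectively trivially) α, β, γ ∈ ℂ such that the antiholomorphic map v ↦ M·conj(v), with M the matrix with rows (0,α,0),(β,0,0),(0,0,γ), satisfies M* H M-bar-compatibility (it is an anti-isometry of H, i.e. conj(Mᵀ) H M = conj(H) appropriately) and maps [p₁] to [p₂] projectively. -/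
open Matrix Complex

noncomputable def H12 (b : ℂ) : Matrix (Fin 3) (Fin 3) ℂ :=
  !![1, b, 0; (starRingEnd ℂ) b, 1, 0; 0, 0, ((Complex.normSq b - 1 : ℝ) : ℂ)]

noncomputable def mat12 (α β γ : ℂ) : Matrix (Fin 3) (Fin 3) ℂ :=
  !![0, α, 0; β, 0, 0; 0, 0, γ]

private lemma conj_exp (θ : ℝ) :
    (starRingEnd ℂ) (Complex.exp (θ * Complex.I)) = Complex.exp (-(θ * Complex.I)) := by
  rw [← Complex.exp_conj]; congr 1; simp

private lemma exp_mul_conj (θ : ℝ) :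
    Complex.exp (θ * Complex.I) * (starRingEnd ℂ) (Complex.exp (θ * Complex.I)) = 1 := by
  rw [conj_exp, ← Complex.exp_add]; simp

private lemma sol_char (b : ℂ) (hb : b ≠ 0) (θ₁ θ₂ : ℝ) (α β γ : ℂ)
    (h1 : (mat12 α β γ)ᵀ * H12 b * (mat12 α β γ).map (starRingEnd ℂ) =
          (H12 b).map (starRingEnd ℂ))
    (h3 : ∃ l : ℂ, l ≠ 0 ∧
        (mat12 α β γ).mulVec (fun i => (starRingEnd ℂ) (![-b, 1, Complex.exp (θ₁ * Complex.I)] i)) =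
          l • ![1, -(starRingEnd ℂ) b, Complex.exp (θ₂ * Complex.I)]) :
    β = α ∧ γ = α * Complex.exp ((θ₁ + θ₂ : ℝ) * Complex.I) ∧ α * (starRingEnd ℂ) α = 1 := by
  obtain ⟨l, hl, hv⟩ := h3
  have e0 := congrFun hv 0
  have e1 := congrFun hv 1
  have e2 := congrFun hv 2
  simp [mat12, Matrix.mulVec, dotProduct, Fin.sum_univ_three, Matrix.vecHead, Matrix.vecTail] at e0 e1 e2
  have h11 := congrFun (congrFun h1 1) 1
  simp [mat12, H12, Matrix.mul_apply, Fin.sum_univ_three, Matrix.transpose_apply,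
    Matrix.vecHead, Matrix.vecTail] at h11
  refine ⟨(e1.resolve_right hb).trans e0.symm, ?_, h11⟩
  have hγ : γ = γ * ((starRingEnd ℂ) (Complex.exp (θ₁ * Complex.I)) *
      Complex.exp (θ₁ * Complex.I)) := by
    rw [mul_comm ((starRingEnd ℂ) _), exp_mul_conj, mul_one]
  rw [hγ, ← mul_assoc, e2, e0, mul_assoc, ← Complex.exp_add]
  push_cast
  ring_nf

/-- The antiholomorphic map v ↦ M·conj(v) determined by M = !![0,α,0;β,0,0;0,0,γ]
which is an anti-isometry of H, an involution, and maps [p₁] to [p₂], exists and is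
unique up to a unimodular scalar. -/
theorem stmt12 (b : ℂ) (hb : b ≠ 0) (hb1 : ‖b‖ ≠ 1) (θ₁ θ₂ : ℝ) :
    (∃ α β γ : ℂ,
      (mat12 α β γ)ᵀ * H12 b * (mat12 α β γ).map (starRingEnd ℂ) =
          (H12 b).map (starRingEnd ℂ) ∧
      mat12 α β γ * (mat12 α β γ).map (starRingEnd ℂ) = 1 ∧
      ∃ l : ℂ, l ≠ 0 ∧
        (mat12 α β γ).mulVec (fun i => (starRingEnd ℂ) (![-b, 1, Complex.exp (θ₁ * Complex.I)] i)) =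
          l • ![1, -(starRingEnd ℂ) b, Complex.exp (θ₂ * Complex.I)]) ∧
    (∀ α β γ α' β' γ' : ℂ,
      ((mat12 α β γ)ᵀ * H12 b * (mat12 α β γ).map (starRingEnd ℂ) =
          (H12 b).map (starRingEnd ℂ) ∧
        mat12 α β γ * (mat12 α β γ).map (starRingEnd ℂ) = 1 ∧
        ∃ l : ℂ, l ≠ 0 ∧
          (mat12 α β γ).mulVec (fun i => (starRingEnd ℂ) (![-b, 1, Complex.exp (θ₁ * Complex.I)] i)) =
            l • ![1, -(starRingEnd ℂ) b, Complex.exp (θ₂ * Complex.I)]) →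
      ((mat12 α' β' γ')ᵀ * H12 b * (mat12 α' β' γ').map (starRingEnd ℂ) =
          (H12 b).map (starRingEnd ℂ) ∧
        mat12 α' β' γ' * (mat12 α' β' γ').map (starRingEnd ℂ) = 1 ∧
        ∃ l : ℂ, l ≠ 0 ∧
          (mat12 α' β' γ').mulVec (fun i => (starRingEnd ℂ) (![-b, 1, Complex.exp (θ₁ * Complex.I)] i)) =
            l • ![1, -(starRingEnd ℂ) b, Complex.exp (θ₂ * Complex.I)]) →
      ∃ u : ℂ, ‖u‖ = 1 ∧ mat12 α' β' γ' = u • mat12 α β γ) := by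
  have hE : Complex.exp ((θ₁ + θ₂ : ℝ) * Complex.I) *
      (starRingEnd ℂ) (Complex.exp ((θ₁ + θ₂ : ℝ) * Complex.I)) = 1 := exp_mul_conj _
  constructor
  · refine ⟨1, 1, Complex.exp ((θ₁ + θ₂ : ℝ) * Complex.I), ?_, ?_, 1, one_ne_zero, ?_⟩
    · ext i j
      fin_cases i <;> fin_cases j <;>
        simp [mat12, H12, Matrix.mul_apply, Fin.sum_univ_three, Matrix.transpose_apply,
          Matrix.vecHead, Matrix.vecTail] <;>
        push_cast <;> push_cast at hE <;>
        first
        | rfl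
        | linear_combination hE
        | linear_combination ((Complex.normSq b : ℂ) - 1) * hE
    · ext i j
      fin_cases i <;> fin_cases j <;>
        simp [mat12, Matrix.mul_apply, Fin.sum_univ_three, Matrix.vecHead, Matrix.vecTail] <;>
        push_cast <;> push_cast at hE <;>
        first
        | rfl
        | linear_combination hE
    · funext i
      fin_cases i <;>
        simp [mat12, Matrix.mulVec, dotProduct, Fin.sum_univ_three, conj_exp, Matrix.vecHead, Matrix.vecTail,
          ← Complex.exp_add] <;>
      · push_cast
        ring_nf
  · rintro α β γ α' β' γ' ⟨h1, _, h3⟩ ⟨h1', _, h3'⟩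
    obtain ⟨hβ, hγ, hα⟩ := sol_char b hb θ₁ θ₂ α β γ h1 h3
    obtain ⟨hβ', hγ', hα'⟩ := sol_char b hb θ₁ θ₂ α' β' γ' h1' h3'
    have hns : Complex.normSq α = 1 := by
      have h := hα
      rw [Complex.mul_conj, ← Complex.ofReal_one, Complex.ofReal_inj] at h
      exact h
    have hns' : Complex.normSq α' = 1 := by
      have h := hα'
      rw [Complex.mul_conj, ← Complex.ofReal_one, Complex.ofReal_inj] at h
      exact h
    have habs : ‖α‖ = 1 := by
      rw [Complex.norm_def, hns, Real.sqrt_one]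
    have habs' : ‖α'‖ = 1 := by
      rw [Complex.norm_def, hns', Real.sqrt_one]
    refine ⟨α' * (starRingEnd ℂ) α, ?_, ?_⟩
    · rw [norm_mul, Complex.norm_conj, habs, habs', one_mul]
    · rw [hβ, hγ, hβ', hγ']
      ext i j
      fin_cases i <;> fin_cases j <;>
        simp [mat12, Matrix.smul_apply, smul_eq_mul, Matrix.vecHead, Matrix.vecTail] <;>
        first
        | linear_combination (-α') * hα
        | linear_combination (-(α' * Complex.exp (((θ₁ : ℂ) + θ₂) * Complex.I))) * hα
end

section
/- Given a flag and a complex line in generic position, represented by p₁ = (1,0,0)ᵀ, c₁ = (0,1,0)ᵀ and a polar vector c₂ = (a,b,1)ᵀ with b ≠ 0 and |b|² + 2Re(a) > 0 (for the form J), there exists g in the stabilizer of the standard flag (matrices [[λ,0,itλ],[0,conj(λ)/λ,0],[0,0,1/conj(λ)]], λ≠0, t∈ℝ) such that g·c₂ is proportional to (a', √2, 1)ᵀ with a' real, a' > −1; moreover the solutions (λ,t) are exactly three, given by t = −Im(a) and the three solutions λ of conj(λ)²·b = √2·λ, and a' satisfies (1+a')⁻¹ = φ(C₁,C₂) = |⟨c₁,c₂⟩|²/(⟨c₁,c₁⟩⟨c₂,c₂⟩)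 = |b|²/(|b|²+2Re(a)). -/
open Matrix Complex

noncomputable def Tmat (l : ℂ) (t : ℝ) : Matrix (Fin 3) (Fin 3) ℂ :=
  !![l, 0, Complex.I * t * l;
     0, (starRingEnd ℂ) l / l, 0;
     0, 0, 1 / (starRingEnd ℂ) l]

lemma keyNormSq (b l : ℂ) (hb : b ≠ 0) (hl : l ≠ 0)
    (h : ((starRingEnd ℂ) l)^2 * b = (Real.sqrt 2 : ℂ) * l) :
    Complex.normSq l = 2 / Complex.normSq b := by
  have h2 := congrArg Complex.normSq h
  simp only [_root_.map_mul, map_pow, Complex.normSq_conj, Complex.normSq_ofReal,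
    Real.mul_self_sqrt (by norm_num : (0:ℝ) ≤ 2)] at h2
  have hnl : Complex.normSq l ≠ 0 := by simpa using hl
  have hnb : Complex.normSq b ≠ 0 := by simpa using hb
  field_simp
  exact mul_left_cancel₀ hnl (by linear_combination h2)

lemma setEq (b : ℂ) (hb : b ≠ 0) :
    {l : ℂ | l ≠ 0 ∧ ((starRingEnd ℂ) l) ^ 2 * b = (Real.sqrt 2 : ℂ) * l}
      = {l : ℂ | l ^ 3 = 2 * (Real.sqrt 2 : ℂ) * b / (Complex.normSq b : ℂ) ^ 2} := by
  have hnb : Complex.normSq b ≠ 0 := by simpa using hb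
  have hnb' : (0:ℝ) < Complex.normSq b := Complex.normSq_pos.mpr hb
  have hnbc : ((Complex.normSq b : ℝ) : ℂ) ≠ 0 := by exact_mod_cast hnb
  have hsq : (Real.sqrt 2 : ℂ) * (Real.sqrt 2 : ℂ) = 2 := by
    norm_cast
    rw [Real.mul_self_sqrt (by norm_num : (0:ℝ) ≤ 2)]
  have hs2 : (Real.sqrt 2 : ℂ) ≠ 0 := by
    intro h; rw [h, mul_zero] at hsq; norm_num at hsq
  ext l
  simp only [Set.mem_setOf_eq]
  constructor
  · rintro ⟨hl, h⟩
    have hnl := keyNormSq b l hb hl h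
    have hmc : l * (starRingEnd ℂ) l = (Complex.normSq l : ℂ) := Complex.mul_conj l
    have h3 : l ^ 2 * (((starRingEnd ℂ) l) ^ 2 * b) = l ^ 2 * ((Real.sqrt 2 : ℂ) * l) := by
      rw [h]
    have h4 : (Complex.normSq l : ℂ) ^ 2 * b = (Real.sqrt 2 : ℂ) * l ^ 3 := by
      linear_combination h3 - ((l * (starRingEnd ℂ) l + (Complex.normSq l : ℂ)) * b) * hmc
    have hnlc : (Complex.normSq l : ℂ) = 2 / (Complex.normSq b : ℂ) := by
      rw [hnl]; push_cast; ring
    rw [hnlc, div_pow, div_mul_eq_mul_div, div_eq_iff (pow_ne_zero 2 hnbc)] at h4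
    rw [eq_div_iff (pow_ne_zero 2 hnbc)]
    linear_combination (-(Real.sqrt 2:ℂ)/2) * h4 - (l^3 * ((Complex.normSq b : ℝ):ℂ)^2/2) * hsq
  · intro h
    have hc : (2 * (Real.sqrt 2 : ℂ) * b / (Complex.normSq b : ℂ) ^ 2) ≠ 0 := by
      apply div_ne_zero (by simp [hs2, hb]) (pow_ne_zero 2 hnbc)
    have hl : l ≠ 0 := by
      intro h0; rw [h0] at h; simp at h; exact hc h.symm
    refine ⟨hl, ?_⟩
    have hnl' : (0:ℝ) < Complex.normSq l := Complex.normSq_pos.mpr hl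
    have hn3 := congrArg Complex.normSq h
    simp only [map_pow, _root_.map_mul, map_div₀, Complex.normSq_ofReal, map_ofNat,
      Complex.normSq_natCast, Real.mul_self_sqrt (by norm_num : (0:ℝ) ≤ 2)] at hn3
    have hn2 : Complex.normSq (2:ℂ) = 4 := by norm_num [Complex.normSq]
    rw [hn2, eq_div_iff (by positivity : (Complex.normSq b * Complex.normSq b)^2 ≠ 0)] at hn3
    have hu : (Complex.normSq l * Complex.normSq b)^3 * Complex.normSq b = 8 * Complex.normSq b := by
      linear_combination hn3
    have hu2 := mul_right_cancel₀ hnb hu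
    have hnl : Complex.normSq l = 2 / Complex.normSq b := by
      rw [eq_div_iff hnb]
      nlinarith [hu2, mul_pos hnl' hnb', sq_nonneg (Complex.normSq l * Complex.normSq b - 2),
        sq_nonneg (Complex.normSq l * Complex.normSq b + 2)]
    have hmc : l * (starRingEnd ℂ) l = (Complex.normSq l : ℂ) := Complex.mul_conj l
    apply mul_left_cancel₀ (pow_ne_zero 2 hl)
    have hnlc : (Complex.normSq l : ℂ) = 2 / (Complex.normSq b : ℂ) := by
      rw [hnl]; push_cast; ring
    calc l ^ 2 * (((starRingEnd ℂ) l) ^ 2 * b)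
        = (l * (starRingEnd ℂ) l)^2 * b := by ring
      _ = ((Complex.normSq l : ℂ))^2 * b := by rw [hmc]
      _ = (2 / (Complex.normSq b : ℂ))^2 * b := by rw [hnlc]
      _ = (Real.sqrt 2 : ℂ) * (2 * (Real.sqrt 2 : ℂ) * b / (Complex.normSq b : ℂ) ^ 2) := by
          field_simp
          linear_combination (-1) * hsq
      _ = (Real.sqrt 2 : ℂ) * l ^ 3 := by rw [h]
      _ = l ^ 2 * ((Real.sqrt 2 : ℂ) * l) := by ring

lemma cardCube (c : ℂ) (hc : c ≠ 0) : ({l : ℂ | l ^ 3 = c}).ncard = 3 := by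
  classical
  have hprim := Complex.isPrimitiveRoot_exp 3 (by norm_num)
  have hnodup := hprim.nthRoots_nodup hc
  have hex : ∃ α : ℂ, α ^ 3 = c := IsAlgClosed.exists_pow_nat_eq c (by norm_num)
  have hcard := hprim.card_nthRoots c
  rw [if_pos hex] at hcard
  have hset : {l : ℂ | l ^ 3 = c} = ↑(Polynomial.nthRoots 3 c).toFinset := by
    ext x; simp [Polynomial.mem_nthRoots (by norm_num : 0 < 3)]
  rw [hset, Set.ncard_coe_finset, ← Multiset.toFinset_eq hnodup, Finset.card_mk, hcard]

lemma mulVecTmat (a b l : ℂ) (t : ℝ) :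
    (Tmat l t).mulVec ![a, b, 1]
      = ![l * a + Complex.I * t * l, (starRingEnd ℂ) l / l * b, 1 / (starRingEnd ℂ) l] := by
  funext i
  fin_cases i <;>
    simp [Tmat, Matrix.mulVec, dotProduct, Fin.sum_univ_three]

/-- Normalization to standard position: there is a real parameter a' > −1 with
(1+a')⁻¹ = φ(C₁,C₂), and an element of the stabilizer of the standard flag sends
c₂ = (a,b,1) to a multiple of (a',√2,1) exactly when t = −Im a and conj(λ)²b = √2 λ;
the latter equation has exactly three nonzero solutions λ. -/
theorem stmt19 (a b : ℂ) (hb : b ≠ 0) (hpos : 0 < Complex.normSq b + 2 * a.re) :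
    ∃ a' : ℝ, -1 < a' ∧
      (1 + a')⁻¹ = Complex.normSq b / (Complex.normSq b + 2 * a.re) ∧
      ({l : ℂ | l ≠ 0 ∧ ((starRingEnd ℂ) l) ^ 2 * b = (Real.sqrt 2 : ℂ) * l}).ncard = 3 ∧
      (∀ l : ℂ, l ≠ 0 → ∀ t : ℝ,
        ((∃ k : ℂ, k ≠ 0 ∧
            (Tmat l t).mulVec ![a, b, 1] = k • ![(a' : ℂ), (Real.sqrt 2 : ℂ), 1]) ↔
          (t = -a.im ∧ ((starRingEnd ℂ) l) ^ 2 * b = (Real.sqrt 2 : ℂ) * l))) := by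
  have hnb : Complex.normSq b ≠ 0 := by simpa using hb
  have hnb' : (0:ℝ) < Complex.normSq b := Complex.normSq_pos.mpr hb
  have hnbc : ((Complex.normSq b : ℝ) : ℂ) ≠ 0 := by exact_mod_cast hnb
  have hsq : (Real.sqrt 2 : ℂ) * (Real.sqrt 2 : ℂ) = 2 := by
    norm_cast
    rw [Real.mul_self_sqrt (by norm_num : (0:ℝ) ≤ 2)]
  have hs2 : (Real.sqrt 2 : ℂ) ≠ 0 := by
    intro h; rw [h, mul_zero] at hsq; norm_num at hsq
  refine ⟨2 * a.re / Complex.normSq b, ?_, ?_, ?_, ?_⟩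
  · rw [lt_div_iff₀ hnb']
    linarith
  · have hne : Complex.normSq b + 2 * a.re ≠ 0 := hpos.ne'
    field_simp
  · rw [setEq b hb]
    apply cardCube
    apply div_ne_zero (by simp [hs2, hb]) (pow_ne_zero 2 hnbc)
  · intro l hl t
    have hL : (starRingEnd ℂ) l ≠ 0 := by simpa using hl
    have hmc : l * (starRingEnd ℂ) l = (Complex.normSq l : ℂ) := Complex.mul_conj l
    constructor
    · rintro ⟨k, hk, hEq⟩
      rw [mulVecTmat] at hEq
      have h0 := congrFun hEq 0
      have h1 := congrFun hEq 1
      have h2 := congrFun hEq 2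
      simp only [Matrix.cons_val_zero, Matrix.cons_val_one, Matrix.head_cons, Pi.smul_apply,
        Matrix.cons_val_two, Matrix.tail_cons, smul_eq_mul, mul_one] at h0 h1 h2
      have hk' : k = 1 / (starRingEnd ℂ) l := h2.symm
      rw [hk'] at h0 h1
      have heq : ((starRingEnd ℂ) l) ^ 2 * b = (Real.sqrt 2 : ℂ) * l := by
        field_simp at h1
        linear_combination h1
      refine ⟨?_, heq⟩
      have h0' : ((Complex.normSq l : ℝ):ℂ) * (a + Complex.I * (t:ℂ)) * ((Complex.normSq b : ℝ):ℂ)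
          = 2 * ((a.re:ℝ):ℂ) := by
        have h := h0
        push_cast at h; field_simp at h
        linear_combination h - ((a + Complex.I*(t:ℂ)) * ((Complex.normSq b:ℝ):ℂ)) * hmc
      have him := congrArg Complex.im h0'
      simp [Complex.mul_im, Complex.add_im, Complex.mul_re] at him
      rcases him with (h | h) | h
      · exact absurd h hl
      · linarith
      · exact absurd h hb
    · rintro ⟨ht, heq⟩
      have hnl := keyNormSq b l hb hl heq
      have hnlc : (Complex.normSq l : ℂ) = 2 / (Complex.normSq b : ℂ) := by
        rw [hnl]; push_cast; ring
      have hre : (a.re:ℂ) + (a.im:ℂ) * Complex.I = a := Complex.re_add_im a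
      subst ht
      have e0 : l * a + Complex.I * ((-a.im : ℝ):ℂ) * l
          = (1 / (starRingEnd ℂ) l) * ((2 * a.re / Complex.normSq b : ℝ):ℂ) := by
        rw [one_div, inv_mul_eq_div, eq_div_iff hL]
        push_cast
        linear_combination (a - Complex.I*(a.im:ℂ)) * hmc + (a - Complex.I*(a.im:ℂ)) * hnlc
          - (2/((Complex.normSq b:ℝ):ℂ)) * hre
      have e1 : (starRingEnd ℂ) l / l * b = (1 / (starRingEnd ℂ) l) * (Real.sqrt 2 : ℂ) := by
        rw [div_mul_eq_mul_div, one_div, inv_mul_eq_div, div_eq_div_iff hl hL]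
        linear_combination heq
      have e2 : (1:ℂ) / (starRingEnd ℂ) l = (1 / (starRingEnd ℂ) l) * 1 := (mul_one _).symm
      refine ⟨1 / (starRingEnd ℂ) l, one_div_ne_zero hL, ?_⟩
      rw [mulVecTmat]
      funext i
      fin_cases i
      · exact e0
      · exact e1
      · exact e2
end
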